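/- Let Z be the 4×4 matrix [[0,1,0,0],[1,1,0,0],[0,0,1,1],[0,0,1,0]] and 𝟙 = (1,1,1,1). Let x, y be natural numbers, let ñ ≥ 2 and l ≥ 1 be natural numbers, and let v = (y·F_{ñ}, x·F_{ñ} + y·F_{ñ−1}, x·F_{ñ} + y·F_{ñ−1}, y·F_{ñ}) ∈ ℕ^4. Then 𝟙ᵗ · Z^l · v = 2·(x·F_{l+2}·F_{ñ} + y·(F_{l+1}·F_{ñ} + F_{l+2}·F_{ñ−1})), where F denotes the Fibonacci sequence. -/

import Mathlib

open Matrix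

lemma Zpow_aux (k : ℕ) :
    (!![0,1,0,0; 1,1,0,0; 0,0,1,1; 0,0,1,0] : Matrix (Fin 4) (Fin 4) ℕ) ^ (k+1) =
    !![Nat.fib k, Nat.fib (k+1), 0, 0;
       Nat.fib (k+1), Nat.fib (k+2), 0, 0;
       0, 0, Nat.fib (k+2), Nat.fib (k+1);
       0, 0, Nat.fib (k+1), Nat.fib k] := by
  induction k with
  | zero =>
    ext i j
    fin_cases i <;> fin_cases j <;> simp [pow_one]
  | succ k ih =>
    rw [pow_succ, ih]
    ext i j
    fin_cases i <;> fin_cases j <;>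
      simp [Matrix.mul_apply, Fin.sum_univ_four, Nat.fib_add_two, Matrix.vecHead, Matrix.vecTail] <;> ring

theorem glued_vector_count
    (Z : Matrix (Fin 4) (Fin 4) ℕ)
    (hZ : Z = !![0,1,0,0; 1,1,0,0; 0,0,1,1; 0,0,1,0])
    (x y : ℕ) (n' l : ℕ) (hn' : 2 ≤ n') (hl : 1 ≤ l)
    (v : Fin 4 → ℕ)
    (hv : v = ![y * Nat.fib n', x * Nat.fib n' + y * Nat.fib (n'-1),
        x * Nat.fib n' + y * Nat.fib (n'-1), y * Nat.fib n']) :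
    dotProduct (fun _ => 1) ((Z ^ l) *ᵥ v) =
      2 * (x * Nat.fib (l+2) * Nat.fib n' +
        y * (Nat.fib (l+1) * Nat.fib n' + Nat.fib (l+2) * Nat.fib (n'-1))) := by
  obtain ⟨k, rfl⟩ := Nat.exists_eq_add_of_le hl
  subst hZ hv
  rw [add_comm 1 k, Zpow_aux]
  have h3 : Nat.fib (3+k) = Nat.fib (k+1) + Nat.fib (k+2) := by
    rw [show 3+k = k+1+2 by ring]; exact Nat.fib_add_two
  have h2 : Nat.fib (2+k) = Nat.fib k + Nat.fib (k+1) := by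
    rw [show 2+k = k+2 by ring]; exact Nat.fib_add_two
  simp [dotProduct, Matrix.mulVec, Fin.sum_univ_four, Matrix.vecHead, Matrix.vecTail,
    h3, h2, show Nat.fib (1+k) = Nat.fib (k+1) by rw [add_comm]]
  have e2 : Nat.fib (k+2) = Nat.fib k + Nat.fib (k+1) := Nat.fib_add_two
  have e1 : Nat.fib (k+1+1) = Nat.fib k + Nat.fib (k+1) := Nat.fib_add_two
  have e3 : Nat.fib (k+1+2) = Nat.fib (k+1) + Nat.fib (k+2) := Nat.fib_add_two
  rw [e3, e1]
  ring
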